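/- Let n ≥ 1, set δ = 0 if n is even and δ = 1 if n is odd, let B be a ⌊n/2⌋ × ⌈n/2⌉ matrix (over a commutative ring, e.g. ℤ), and let A be the n×n block matrix A = [[0, B],[Bᵀ, 0]]. Then χ(A;x) = x^δ · χ(BBᵀ; x²) and x^δ · χ(A;x) = χ(BᵀB; x²), where for a square matrix M, χ(M;x) = det(xI − M). -/
import Mathlib


open Polynomial Matrix

private lemma charmatrix_map_sq {R : Type*} [CommRing R] {ι : Type*} [Fintype ι] [DecidableEq ι]
    (M : Matrix ι ι R) :
    (charmatrix M).map (eval₂RingHom (C : R →+* R[X]) (X ^ 2)) =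
      (X ^ 2 : R[X]) • (1 : Matrix ι ι R[X]) - M.map (C : R →+* R[X]) := by
  ext i j
  by_cases h : i = j
  · subst h
    simp [charmatrix_apply_eq, Matrix.sub_apply, Matrix.smul_apply, Matrix.one_apply_eq]
  · simp [charmatrix_apply_ne _ _ _ h, Matrix.sub_apply, Matrix.smul_apply,
      Matrix.one_apply_ne h]

private lemma charpoly_comp_sq {R : Type*} [CommRing R] {ι : Type*} [Fintype ι] [DecidableEq ι]
    (M : Matrix ι ι R) :
    M.charpoly.comp (X ^ 2 : R[X]) =
      ((X ^ 2 : R[X]) • (1 : Matrix ι ι R[X]) - M.map (C : R →+* R[X])).det := by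
  have : M.charpoly.comp (X ^ 2 : R[X]) =
      eval₂RingHom (C : R →+* R[X]) (X ^ 2) M.charpoly := rfl
  rw [this, Matrix.charpoly, RingHom.map_det, RingHom.mapMatrix_apply, charmatrix_map_sq]

private lemma charmatrix_zero_eq {R : Type*} [CommRing R] {ι : Type*} [Fintype ι] [DecidableEq ι] :
    charmatrix (0 : Matrix ι ι R) = (X : R[X]) • (1 : Matrix ι ι R[X]) := by
  ext i j
  by_cases h : i = j
  · subst h; simp
  · simp [charmatrix_apply_ne _ _ _ h, Matrix.one_apply_ne h]

private lemma smul_one_mulSmulOne' {R : Type*} [CommRing R] {ι : Type*} [Fintype ι]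
    [DecidableEq ι] :
    ((X : R[X]) • (1 : Matrix ι ι R[X])) * ((X : R[X]) • (1 : Matrix ι ι R[X])) =
      (X ^ 2 : R[X]) • (1 : Matrix ι ι R[X]) := by
  rw [Matrix.smul_mul, Matrix.mul_smul, one_mul, smul_smul, ← sq]

private lemma mulSmulOne' {R : Type*} [CommRing R] {ι κ : Type*} [Fintype κ] [DecidableEq κ]
    (M : Matrix ι κ R[X]) :
    M * ((X : R[X]) • (1 : Matrix κ κ R[X])) = (X : R[X]) • M := by
  rw [Matrix.mul_smul, Matrix.mul_one]

private lemma smulOneMul' {R : Type*} [CommRing R] {ι κ : Type*} [Fintype ι] [DecidableEq ι]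
    (M : Matrix ι κ R[X]) :
    ((X : R[X]) • (1 : Matrix ι ι R[X])) * M = (X : R[X]) • M := by
  rw [Matrix.smul_mul, Matrix.one_mul]

/-- Let `n ≥ 1`, `δ = 0` if `n` is even and `δ = 1` if `n` is odd,
let `B` be a `⌊n/2⌋ × ⌈n/2⌉` matrix over a commutative ring and
`A = [[0, B], [Bᵀ, 0]]`. Then `χ(A;x) = x^δ · χ(BBᵀ;x²)` and
`x^δ · χ(A;x) = χ(BᵀB;x²)`. -/
theorem charpoly_fromBlocks_bipartite {R : Type*} [CommRing R] (n : ℕ) (hn : 1 ≤ n)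
    (B : Matrix (Fin (n / 2)) (Fin ((n + 1) / 2)) R) :
    (Matrix.fromBlocks 0 B Bᵀ 0).charpoly =
      X ^ (n % 2) * ((B * Bᵀ).charpoly.comp (X ^ 2)) ∧
    X ^ (n % 2) * (Matrix.fromBlocks 0 B Bᵀ 0).charpoly =
      (Bᵀ * B).charpoly.comp (X ^ 2) := by
  have hnmk : n = n / 2 + (n + 1) / 2 := by omega
  let Bc : Matrix (Fin (n / 2)) (Fin ((n + 1) / 2)) R[X] := B.map (C : R →+* R[X])
  let Btc : Matrix (Fin ((n + 1) / 2)) (Fin (n / 2)) R[X] := Bᵀ.map (C : R →+* R[X])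
  have hchm : charmatrix (Matrix.fromBlocks 0 B Bᵀ 0) =
      Matrix.fromBlocks ((X : R[X]) • 1) (-Bc) (-Btc) ((X : R[X]) • 1) := by
    rw [charmatrix_fromBlocks, charmatrix_zero_eq, charmatrix_zero_eq]
  have hdetX : ∀ (j : ℕ), ((X : R[X]) • (1 : Matrix (Fin j) (Fin j) R[X])).det = X ^ j := by
    intro j; rw [Matrix.det_smul, Matrix.det_one, mul_one, Fintype.card_fin]
  have hdetX2 : ∀ (j : ℕ),
      ((X ^ 2 : R[X]) • (1 : Matrix (Fin j) (Fin j) R[X])).det = X ^ (2 * j) := by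
    intro j; rw [Matrix.det_smul, Matrix.det_one, mul_one, Fintype.card_fin, ← pow_mul]
  have hreg : ∀ j : ℕ, IsRegular ((X : R[X]) ^ j) := fun j => (monic_X_pow j).isRegular
  constructor
  · -- first identity
    have hmul : charmatrix (Matrix.fromBlocks 0 B Bᵀ 0) *
        Matrix.fromBlocks ((X : R[X]) • 1) 0 Btc ((X : R[X]) • 1) =
        Matrix.fromBlocks ((X ^ 2 : R[X]) • 1 - Bc * Btc) (-((X : R[X]) • Bc)) 0
          ((X ^ 2 : R[X]) • 1) := by
      rw [hchm, Matrix.fromBlocks_multiply]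
      have hsq : (X * X : R[X]) = X ^ 2 := (sq X).symm
      simp only [Matrix.neg_mul, Matrix.mul_zero, Matrix.mul_smul, Matrix.smul_mul,
        Matrix.mul_one, Matrix.one_mul, smul_smul, hsq, smul_neg, neg_zero, zero_add,
        add_zero, neg_add_cancel, add_neg_cancel, ← sub_eq_add_neg, neg_add_eq_sub, zero_sub, sub_zero]
    have hdet := congrArg Matrix.det hmul
    rw [Matrix.det_mul, Matrix.det_fromBlocks_zero₁₂, Matrix.det_fromBlocks_zero₂₁,
      hdetX (n / 2), hdetX ((n + 1) / 2), hdetX2 ((n + 1) / 2), ← pow_add, ← hnmk] at hdet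
    have hrhs : ((X ^ 2 : R[X]) • (1 : Matrix (Fin (n / 2)) (Fin (n / 2)) R[X]) -
        Bc * Btc).det = (B * Bᵀ).charpoly.comp (X ^ 2) := by
      rw [charpoly_comp_sq]
      congr 1
      rw [Matrix.map_mul]
    rw [hrhs] at hdet
    have hx2k : (X : R[X]) ^ (2 * ((n + 1) / 2)) = X ^ (n % 2) * X ^ n := by
      rw [← pow_add]; congr 1; omega
    rw [hx2k] at hdet
    refine (hreg n).right ?_
    rw [Matrix.charpoly]
    linear_combination hdet
  · -- second identity
    have hmul : charmatrix (Matrix.fromBlocks 0 B Bᵀ 0) *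
        Matrix.fromBlocks ((X : R[X]) • 1) Bc 0 ((X : R[X]) • 1) =
        Matrix.fromBlocks ((X ^ 2 : R[X]) • 1) 0 (-((X : R[X]) • Btc))
          ((X ^ 2 : R[X]) • 1 - Btc * Bc) := by
      rw [hchm, Matrix.fromBlocks_multiply]
      have hsq : (X * X : R[X]) = X ^ 2 := (sq X).symm
      simp only [Matrix.neg_mul, Matrix.mul_zero, Matrix.mul_smul, Matrix.smul_mul,
        Matrix.mul_one, Matrix.one_mul, smul_smul, hsq, smul_neg, neg_zero, zero_add,
        add_zero, neg_add_cancel, add_neg_cancel, ← sub_eq_add_neg, neg_add_eq_sub, zero_sub, sub_zero]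
    have hdet := congrArg Matrix.det hmul
    rw [Matrix.det_mul, Matrix.det_fromBlocks_zero₂₁, Matrix.det_fromBlocks_zero₁₂,
      hdetX (n / 2), hdetX ((n + 1) / 2), hdetX2 (n / 2), ← pow_add, ← hnmk] at hdet
    have hrhs : ((X ^ 2 : R[X]) • (1 : Matrix (Fin ((n + 1) / 2)) (Fin ((n + 1) / 2)) R[X]) -
        Btc * Bc).det = (Bᵀ * B).charpoly.comp (X ^ 2) := by
      rw [charpoly_comp_sq]
      congr 1
      rw [Matrix.map_mul]
    rw [hrhs] at hdet
    have hxn : (X : R[X]) ^ n = X ^ (n % 2) * X ^ (2 * (n / 2)) := by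
      rw [← pow_add]; congr 1; omega
    rw [hxn] at hdet
    refine (hreg (2 * (n / 2))).right ?_
    rw [Matrix.charpoly]
    linear_combination hdet
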